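/- arXiv:1805.02979 — 3 statements merged into one kernel-verified Lean document; each statement's English description precedes it below -/
import Mathlib

section
/- If u is a real-valued harmonic function on 𝔻 with values in (-1,1) and ω is an analytic function on 𝔻 with u = Re ω, then for all z ∈ 𝔻: (π/2)·|ω'(z)|/cos(π·u(z)/2) ≤ 2/(1−|z|²). Equivalently, |∇u(z)| ≤ (4/π)·cos(π u(z)/2)/(1−|z|²). -/
open Real Set Metric

namespace HSP

lemma normSq_lt_one {z : ℂ} (h : ‖z‖ < 1) : Complex.normSq z < 1 := by
  rw [← Complex.sq_norm]
  nlinarith [norm_nonneg z]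

lemma key_normSq (a w : ℂ) :
    Complex.normSq (1 - (starRingEnd ℂ) a * w) - Complex.normSq (w - a)
      = (1 - Complex.normSq a) * (1 - Complex.normSq w) := by
  simp only [Complex.normSq_apply, Complex.sub_re, Complex.sub_im, Complex.mul_re,
    Complex.mul_im, Complex.one_re, Complex.one_im, Complex.conj_re, Complex.conj_im]
  ring

lemma den_ne_zero {a w : ℂ} (ha : ‖a‖ < 1) (hw : ‖w‖ < 1) :
    (1 : ℂ) - (starRingEnd ℂ) a * w ≠ 0 := by
  intro h0
  rw [sub_eq_zero] at h0
  have h : ‖(starRingEnd ℂ) a * w‖ < 1 := by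
    rw [norm_mul, RCLike.norm_conj]
    nlinarith [norm_nonneg a, norm_nonneg w]
  rw [← h0, norm_one] at h
  exact lt_irrefl _ h

lemma mobius_lt_one {a w : ℂ} (ha : ‖a‖ < 1) (hw : ‖w‖ < 1) :
    ‖(w - a) / (1 - (starRingEnd ℂ) a * w)‖ < 1 := by
  have hden := den_ne_zero ha hw
  rw [norm_div, div_lt_one (norm_pos_iff.mpr hden)]
  have hns : ∀ x : ℂ, ‖x‖ ^ 2 = Complex.normSq x := fun x => by
    rw [← Complex.sq_norm]
  have hsq : ‖w - a‖ ^ 2 < ‖1 - (starRingEnd ℂ) a * w‖ ^ 2 := by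
    rw [hns, hns]
    nlinarith [key_normSq a w, normSq_lt_one ha, normSq_lt_one hw]
  exact lt_of_pow_lt_pow_left₀ 2 (norm_nonneg _) hsq

lemma mobius_hasDerivAt {c z : ℂ} (h : (1 : ℂ) - (starRingEnd ℂ) c * z ≠ 0) :
    HasDerivAt (fun w => (w - c) / (1 - (starRingEnd ℂ) c * w))
      ((1 - (Complex.normSq c : ℂ)) / (1 - (starRingEnd ℂ) c * z) ^ 2) z := by
  have h1 : HasDerivAt (fun w : ℂ => w - c) 1 z := (hasDerivAt_id z).sub_const c
  have h2 : HasDerivAt (fun w : ℂ => (1 : ℂ) - (starRingEnd ℂ) c * w)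
      (-(starRingEnd ℂ) c) z := by
    simpa using ((hasDerivAt_id z).const_mul ((starRingEnd ℂ) c)).const_sub 1
  have := h1.div h2 h
  refine this.congr_deriv ?_
  rw [Complex.normSq_eq_conj_mul_self]
  ring

/-- Schwarz–Pick, derivative form. -/
lemma schwarz_pick {g : ℂ → ℂ} (hg : DifferentiableOn ℂ g (ball 0 1))
    (hm : MapsTo g (ball 0 1) (ball 0 1)) {a : ℂ} (ha : a ∈ ball 0 1) :
    ‖deriv g a‖ * (1 - ‖a‖ ^ 2) ≤ 1 - ‖g a‖ ^ 2 := by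
  have ha' : ‖a‖ < 1 := by simpa using ha
  have hb' : ‖g a‖ < 1 := by simpa using hm ha
  have hna : ‖(-a : ℂ)‖ < 1 := by simpa using ha'
  set b := g a with hbdef
  set φ : ℂ → ℂ := fun z => (z - (-a)) / (1 - (starRingEnd ℂ) (-a) * z) with hφ
  set ψ : ℂ → ℂ := fun w => (w - b) / (1 - (starRingEnd ℂ) b * w) with hψ
  have hφ0 : φ 0 = a := by simp [hφ]
  have hφmaps : MapsTo φ (ball 0 1) (ball 0 1) := fun z hz => by
    simp only [mem_ball_zero_iff] at *
    exact mobius_lt_one hna hz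
  have hψmaps : MapsTo ψ (ball 0 1) (ball 0 1) := fun z hz => by
    simp only [mem_ball_zero_iff] at *
    exact mobius_lt_one hb' hz
  set h : ℂ → ℂ := ψ ∘ g ∘ φ with hh
  have hmaps : MapsTo h (ball 0 1) (ball 0 1) := (hψmaps.comp hm).comp hφmaps
  have hh0 : h 0 = 0 := by
    simp only [hh, Function.comp_apply, hφ0, ← hbdef, hψ]
    simp
  -- differentiability of h on the ball
  have hφdiff : ∀ z ∈ ball (0 : ℂ) 1, DifferentiableAt ℂ φ z := fun z hz =>
    (mobius_hasDerivAt (den_ne_zero hna (by simpa using hz))).differentiableAt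
  have hψdiff : ∀ z ∈ ball (0 : ℂ) 1, DifferentiableAt ℂ ψ z := fun z hz =>
    (mobius_hasDerivAt (den_ne_zero hb' (by simpa using hz))).differentiableAt
  have hhd : DifferentiableOn ℂ h (ball 0 1) := fun z hz => by
    have h1 := hφdiff z hz
    have h2 := hg.differentiableAt (isOpen_ball.mem_nhds (hφmaps hz))
    have h3 := hψdiff _ (hm (hφmaps hz))
    exact ((h3.comp _ h2).comp _ h1).differentiableWithinAt
  -- derivative of h at 0
  have hφd : HasDerivAt φ (1 - (Complex.normSq a : ℂ)) 0 := by
    have := mobius_hasDerivAt (c := -a) (z := 0) (den_ne_zero hna (by simp))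
    convert this using 1
    simp [Complex.normSq_neg]
  have hgd : HasDerivAt g (deriv g a) a :=
    (hg.differentiableAt (isOpen_ball.mem_nhds ha)).hasDerivAt
  have hbne : (1 : ℂ) - (Complex.normSq b : ℂ) ≠ 0 := by
    intro h0
    rw [sub_eq_zero] at h0
    have h1 : (1 : ℝ) = Complex.normSq b := by exact_mod_cast h0
    linarith [normSq_lt_one hb']
  have hψd : HasDerivAt ψ (1 / (1 - (Complex.normSq b : ℂ))) b := by
    have hden : (1 : ℂ) - (starRingEnd ℂ) b * b ≠ 0 := den_ne_zero hb' hb'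
    have := mobius_hasDerivAt (c := b) (z := b) hden
    have hcb : (starRingEnd ℂ) b * b = (Complex.normSq b : ℂ) := by
      rw [Complex.normSq_eq_conj_mul_self]
    rw [hcb] at this hden
    convert this using 1
    rw [sq]
    field_simp
  have hhd0 : HasDerivAt h
      (1 / (1 - (Complex.normSq b : ℂ)) * (deriv g a * (1 - (Complex.normSq a : ℂ)))) 0 := by
    have hg0 : HasDerivAt g (deriv g a) (φ 0) := by rwa [hφ0]
    have hgφ : HasDerivAt (g ∘ φ) (deriv g a * (1 - (Complex.normSq a : ℂ))) 0 :=
      hg0.comp 0 hφd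
    have hψb : HasDerivAt ψ (1 / (1 - (Complex.normSq b : ℂ))) ((g ∘ φ) 0) := by
      simpa [Function.comp, hφ0, ← hbdef] using hψd
    exact hψb.comp 0 hgφ
  -- Schwarz lemma
  have hle : ‖deriv h 0‖ ≤ 1 := by
    have := Complex.norm_deriv_le_div_of_mapsTo_ball (R₁ := 1) (R₂ := 1) hhd
      (by rw [hh0]; exact hmaps.mono_right ball_subset_closedBall) one_pos
    simpa using this
  rw [hhd0.deriv] at hle
  rw [norm_mul, norm_mul, norm_div, norm_one] at hle
  have e1 : ‖(1 : ℂ) - (Complex.normSq a : ℂ)‖ = 1 - ‖a‖ ^ 2 := by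
    have h1 := normSq_lt_one ha'
    rw [show ((1 : ℂ) - (Complex.normSq a : ℂ)) = ((1 - Complex.normSq a : ℝ) : ℂ) by push_cast; ring,
      Complex.norm_real, Real.norm_eq_abs, abs_of_nonneg (by linarith), ← Complex.sq_norm]
  have e2 : ‖(1 : ℂ) - (Complex.normSq b : ℂ)‖ = 1 - ‖b‖ ^ 2 := by
    have h1 := normSq_lt_one hb'
    rw [show ((1 : ℂ) - (Complex.normSq b : ℂ)) = ((1 - Complex.normSq b : ℝ) : ℂ) by push_cast; ring,
      Complex.norm_real, Real.norm_eq_abs, abs_of_nonneg (by linarith), ← Complex.sq_norm]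
  rw [e1, e2] at hle
  have hbpos : 0 < 1 - ‖b‖ ^ 2 := by nlinarith [norm_nonneg b]
  rw [div_mul_eq_mul_div, one_mul, div_le_one hbpos] at hle
  linarith [hle]

lemma normSq_cos (z : ℂ) :
    Complex.normSq (Complex.cos z) = Real.cos z.re ^ 2 + Real.sinh z.im ^ 2 := by
  have h : Complex.cos z = (↑(Real.cos z.re * Real.cosh z.im) : ℂ)
      + (↑(-(Real.sin z.re * Real.sinh z.im)) : ℝ) * Complex.I := by
    rw [Complex.cos_eq]
    push_cast
    ring
  rw [h, Complex.normSq_add_mul_I]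
  linear_combination Real.cos z.re ^ 2 * Real.cosh_sq z.im
    + Real.sinh z.im ^ 2 * Real.sin_sq_add_cos_sq z.re

lemma normSq_sin (z : ℂ) :
    Complex.normSq (Complex.sin z) = Real.sin z.re ^ 2 + Real.sinh z.im ^ 2 := by
  have h : Complex.sin z = (↑(Real.sin z.re * Real.cosh z.im) : ℂ)
      + (↑(Real.cos z.re * Real.sinh z.im) : ℝ) * Complex.I := by
    rw [Complex.sin_eq]
    push_cast
    ring
  rw [h, Complex.normSq_add_mul_I]
  linear_combination Real.sin z.re ^ 2 * Real.cosh_sq z.im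
    + Real.sinh z.im ^ 2 * Real.sin_sq_add_cos_sq z.re

lemma normSq_cos_sub_sin (z : ℂ) :
    Complex.normSq (Complex.cos z) - Complex.normSq (Complex.sin z)
      = Real.cos (2 * z.re) := by
  rw [normSq_cos, normSq_sin, Real.cos_two_mul]
  linear_combination -Real.sin_sq_add_cos_sq z.re

lemma norm_sq_eq (x : ℂ) : ‖x‖ ^ 2 = Complex.normSq x := by
  rw [← Complex.sq_norm]

lemma strip_cos_pos {x : ℝ} (hx : |x| < 1) : 0 < Real.cos (π * x / 2) := by
  rw [abs_lt] at hx
  apply Real.cos_pos_of_mem_Ioo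
  constructor
  · nlinarith [Real.pi_pos]
  · nlinarith [Real.pi_pos]

lemma cos_zeta_ne {w : ℂ} (hw : |w.re| < 1) :
    Complex.cos (((π/4 : ℝ) : ℂ) * w) ≠ 0 := by
  set ζ : ℂ := ((π/4 : ℝ) : ℂ) * w with hζ
  have hre : ζ.re = π/4 * w.re := Complex.re_ofReal_mul _ _
  have hc : 0 < Real.cos ζ.re := by
    rw [hre]
    apply Real.cos_pos_of_mem_Ioo
    rw [abs_lt] at hw
    constructor
    · nlinarith [Real.pi_pos]
    · nlinarith [Real.pi_pos]
  have h1 : 0 < Complex.normSq (Complex.cos ζ) := by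
    rw [normSq_cos]
    nlinarith [sq_nonneg (Real.sinh ζ.im)]
  exact Complex.normSq_pos.mp h1

lemma one_sub_normSq_tan {w : ℂ} (hw : |w.re| < 1) :
    1 - ‖Complex.tan (((π/4 : ℝ) : ℂ) * w)‖ ^ 2
      = Real.cos (π * w.re / 2) / Complex.normSq (Complex.cos (((π/4 : ℝ) : ℂ) * w)) := by
  set ζ : ℂ := ((π/4 : ℝ) : ℂ) * w with hζ
  have hcos := cos_zeta_ne hw
  have hNc : 0 < Complex.normSq (Complex.cos ζ) := Complex.normSq_pos.mpr hcos
  have hre : ζ.re = π/4 * w.re := Complex.re_ofReal_mul _ _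
  have harg : Real.cos (2 * ζ.re) = Real.cos (π * w.re / 2) := by
    congr 1
    rw [hre]; ring
  rw [Complex.tan_eq_sin_div_cos, norm_div, div_pow, norm_sq_eq, norm_sq_eq]
  rw [eq_div_iff (ne_of_gt hNc), sub_mul, div_mul_cancel₀ _ (ne_of_gt hNc), one_mul,
    ← harg, ← normSq_cos_sub_sin]

lemma norm_tan_lt_one {w : ℂ} (hw : |w.re| < 1) :
    ‖Complex.tan (((π/4 : ℝ) : ℂ) * w)‖ < 1 := by
  have h1 := one_sub_normSq_tan hw
  have h2 : 0 < Real.cos (π * w.re / 2) := strip_cos_pos hw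
  have h3 : 0 < Complex.normSq (Complex.cos (((π/4 : ℝ) : ℂ) * w)) :=
    Complex.normSq_pos.mpr (cos_zeta_ne hw)
  nlinarith [norm_nonneg (Complex.tan (((π/4 : ℝ) : ℂ) * w)), div_pos h2 h3]

end HSP

open HSP

/-- Schwarz–Pick type inequality for real harmonic functions: if `u = Re ω` with
`ω` holomorphic on `𝔻` and `u` has values in `(-1,1)`, then for all `z ∈ 𝔻`,
`(π/2)·|ω'(z)|/cos (π u(z)/2) ≤ 2/(1-|z|²)`, equivalently
`|∇u(z)| ≤ (4/π)·cos (π u(z)/2)/(1-|z|²)`. -/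
theorem harmonic_schwarz_pick (u : ℂ → ℝ) (ω : ℂ → ℂ)
    (hω : DifferentiableOn ℂ ω (Metric.ball 0 1))
    (hre : ∀ z ∈ Metric.ball (0 : ℂ) 1, u z = (ω z).re)
    (hmaps : Set.MapsTo u (Metric.ball 0 1) (Set.Ioo (-1 : ℝ) 1)) :
    ∀ z ∈ Metric.ball (0 : ℂ) 1,
      (Real.pi / 2) * ‖deriv ω z‖ / Real.cos (Real.pi * u z / 2) ≤ 2 / (1 - ‖z‖ ^ 2) ∧
      ‖fderiv ℝ u z‖ ≤ (4 / Real.pi) * Real.cos (Real.pi * u z / 2) / (1 - ‖z‖ ^ 2) := by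
  intro z hz
  have hπ := Real.pi_pos
  have hz' : ‖z‖ < 1 := by simpa using hz
  have hz2 : 0 < 1 - ‖z‖ ^ 2 := by nlinarith [norm_nonneg z]
  have habsmem : ∀ x ∈ Metric.ball (0 : ℂ) 1, |(ω x).re| < 1 := fun x hx => by
    have h := hmaps hx
    rw [hre x hx] at h
    exact abs_lt.mpr ⟨h.1, h.2⟩
  have habs : |(ω z).re| < 1 := habsmem z hz
  set g : ℂ → ℂ := fun x => Complex.tan (((π/4 : ℝ) : ℂ) * ω x) with hgdef
  have hgd : DifferentiableOn ℂ g (ball 0 1) := fun x hx => by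
    have hωx : DifferentiableAt ℂ ω x := hω.differentiableAt (isOpen_ball.mem_nhds hx)
    have hcos := cos_zeta_ne (habsmem x hx)
    exact ((Complex.differentiableAt_tan.mpr hcos).comp x
      (hωx.const_mul _)).differentiableWithinAt
  have hgm : MapsTo g (ball 0 1) (ball 0 1) := fun x hx => by
    simp only [mem_ball_zero_iff]
    exact norm_tan_lt_one (habsmem x hx)
  have hSP := schwarz_pick hgd hgm hz
  have hωz : DifferentiableAt ℂ ω z := hω.differentiableAt (isOpen_ball.mem_nhds hz)
  have hcosz := cos_zeta_ne habs
  have hder : HasDerivAt g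
      (1 / Complex.cos (((π/4 : ℝ) : ℂ) * ω z) ^ 2 * (((π/4 : ℝ) : ℂ) * deriv ω z)) z := by
    have h1 : HasDerivAt (fun x => ((π/4 : ℝ) : ℂ) * ω x) (((π/4 : ℝ) : ℂ) * deriv ω z) z :=
      hωz.hasDerivAt.const_mul _
    exact (Complex.hasDerivAt_tan hcosz).comp z h1
  rw [hder.deriv] at hSP
  set Nc := Complex.normSq (Complex.cos (((π/4 : ℝ) : ℂ) * ω z)) with hNcdef
  have hNcpos : 0 < Nc := Complex.normSq_pos.mpr hcosz
  have hnorm : ‖1 / Complex.cos (((π/4 : ℝ) : ℂ) * ω z) ^ 2 * (((π/4 : ℝ) : ℂ) * deriv ω z)‖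
      = π/4 * ‖deriv ω z‖ / Nc := by
    rw [norm_mul, norm_mul, norm_div, norm_one, norm_pow, Complex.norm_real,
      Real.norm_eq_abs, abs_of_nonneg (by positivity : (0:ℝ) ≤ π/4)]
    rw [norm_sq_eq, ← hNcdef]
    field_simp
  rw [hnorm] at hSP
  have hgz : 1 - ‖g z‖ ^ 2 = Real.cos (π * (ω z).re / 2) / Nc := one_sub_normSq_tan habs
  rw [hgz] at hSP
  have hCeq : Real.cos (π * u z / 2) = Real.cos (π * (ω z).re / 2) := by rw [hre z hz]
  have hCpos : 0 < Real.cos (π * u z / 2) := by rw [hCeq]; exact strip_cos_pos habs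
  set C := Real.cos (π * u z / 2) with hCdef
  rw [← hCeq] at hSP
  have hmain : π/4 * ‖deriv ω z‖ * (1 - ‖z‖ ^ 2) ≤ C := by
    have h1 : π/4 * ‖deriv ω z‖ / Nc * (1 - ‖z‖ ^ 2)
        = π/4 * ‖deriv ω z‖ * (1 - ‖z‖ ^ 2) / Nc := by ring
    rw [h1, div_le_div_iff₀ hNcpos hNcpos] at hSP
    have := mul_le_mul_of_nonneg_right (le_of_eq (rfl : C = C)) (le_of_lt hNcpos)
    nlinarith [hSP]
  constructor
  · rw [div_le_div_iff₀ hCpos hz2]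
    have h2 : π/2 * ‖deriv ω z‖ * (1 - ‖z‖ ^ 2)
        = 2 * (π/4 * ‖deriv ω z‖ * (1 - ‖z‖ ^ 2)) := by ring
    linarith [hmain, h2.le, h2.ge]
  · have hA : ‖fderiv ℝ u z‖ ≤ ‖deriv ω z‖ := by
      have hev : u =ᶠ[nhds z] fun x => (ω x).re :=
        Filter.eventuallyEq_of_mem (isOpen_ball.mem_nhds hz) hre
      have hfd : fderiv ℝ u z = Complex.reCLM.comp (fderiv ℝ ω z) := by
        rw [hev.fderiv_eq]
        exact (Complex.reCLM.hasFDerivAt.comp z (hωz.restrictScalars ℝ).hasFDerivAt).fderiv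
      have hfr : ‖fderiv ℝ ω z‖ = ‖deriv ω z‖ := by
        rw [hωz.fderiv_restrictScalars ℝ, ContinuousLinearMap.norm_restrictScalars,
          hωz.hasDerivAt.hasFDerivAt.fderiv, ContinuousLinearMap.norm_toSpanSingleton]
      calc ‖fderiv ℝ u z‖ = ‖Complex.reCLM.comp (fderiv ℝ ω z)‖ := by rw [hfd]
        _ ≤ ‖Complex.reCLM‖ * ‖fderiv ℝ ω z‖ := ContinuousLinearMap.opNorm_comp_le _ _
        _ = ‖deriv ω z‖ := by rw [Complex.reCLM_norm, one_mul, hfr]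
    have hB : ‖deriv ω z‖ ≤ 4 / π * C / (1 - ‖z‖ ^ 2) := by
      rw [le_div_iff₀ hz2]
      have h3 : ‖deriv ω z‖ * (1 - ‖z‖ ^ 2)
          = 4/π * (π/4 * ‖deriv ω z‖ * (1 - ‖z‖ ^ 2)) := by field_simp
      rw [h3]
      exact mul_le_mul_of_nonneg_left hmain (by positivity)
    exact hA.trans hB
end

section
/- Let f = g + h̄ be a complex-valued harmonic function on 𝔻 (g, h holomorphic) whose image G = f(𝔻) has finite diameter d. Then π·Λ_f(0) ≤ 2d, where Λ_f(0) = |g'(0)| + |h'(0)|. Equality holds for u_d(z) = (d/π)·arg((1+z)/(1−z)). -/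
open Real Set Metric Complex

lemma aux_mobius (Φ : ℂ → ℂ) (hΦ : DifferentiableOn ℂ Φ (Metric.ball 0 1))
    (hb : ∀ z ∈ Metric.ball (0:ℂ) 1, ‖Φ z‖ < 1) :
    ‖deriv Φ 0‖ ≤ 1 - ‖Φ 0‖ ^ 2 := by
  have h0 : (0:ℂ) ∈ Metric.ball (0:ℂ) 1 := by simp
  set w0 := Φ 0 with hw0
  have hw0n : ‖w0‖ < 1 := hb 0 h0
  have key : ∀ w : ℂ, Complex.normSq (1 - (starRingEnd ℂ) w0 * w) - Complex.normSq (w - w0)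
      = (1 - Complex.normSq w0) * (1 - Complex.normSq w) := by
    intro w
    simp only [Complex.normSq_apply, Complex.sub_re, Complex.sub_im, Complex.mul_re,
      Complex.mul_im, Complex.one_re, Complex.one_im, Complex.conj_re, Complex.conj_im]
    ring
  have hnsq : ∀ w : ℂ, ‖w‖ < 1 → Complex.normSq w < 1 := by
    intro w hw
    rw [← Complex.sq_norm]
    nlinarith [norm_nonneg w]
  have hden : ∀ w : ℂ, ‖w‖ < 1 → (1 - (starRingEnd ℂ) w0 * w) ≠ 0 := by
    intro w hw hc
    have e := key w
    rw [hc, map_zero] at e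
    nlinarith [Complex.normSq_nonneg (w - w0), hnsq w hw, hnsq w0 hw0n]
  set Ψ : ℂ → ℂ := fun z => (Φ z - w0) / (1 - (starRingEnd ℂ) w0 * Φ z) with hΨ
  have hΨdiff : DifferentiableOn ℂ Ψ (Metric.ball 0 1) := by
    apply DifferentiableOn.div (hΦ.sub_const w0)
    · exact (differentiableOn_const _).sub ((differentiableOn_const _).mul hΦ)
    · exact fun z hz => hden (Φ z) (hb z hz)
  have hΨ0 : Ψ 0 = 0 := by
    simp [hΨ, ← hw0]
  have hΨmaps : Set.MapsTo Ψ (Metric.ball 0 1) (Metric.ball (Ψ 0) 1) := by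
    intro z hz
    rw [hΨ0, Metric.mem_ball, dist_zero_right]
    have hzn := hb z hz
    have hne := hden (Φ z) hzn
    have hlt : Complex.normSq (Φ z - w0) < Complex.normSq (1 - (starRingEnd ℂ) w0 * Φ z) := by
      nlinarith [key (Φ z), hnsq (Φ z) hzn, hnsq w0 hw0n]
    have hnormlt : ‖Φ z - w0‖ < ‖1 - (starRingEnd ℂ) w0 * Φ z‖ := by
      apply lt_of_pow_lt_pow_left₀ 2 (norm_nonneg _)
      rw [Complex.sq_norm, Complex.sq_norm]
      exact hlt
    simp only [hΨ, norm_div]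
    rw [div_lt_one (lt_of_le_of_lt (norm_nonneg _) hnormlt)]
    exact hnormlt
  have hSch : ‖deriv Ψ 0‖ ≤ 1 / 1 :=
    Complex.norm_deriv_le_div_of_mapsTo_ball hΨdiff (hΨmaps.mono_right Metric.ball_subset_closedBall) one_pos
  -- compute deriv Ψ 0
  have hΦ0 : DifferentiableAt ℂ Φ 0 := hΦ.differentiableAt (Metric.isOpen_ball.mem_nhds h0)
  have hd1 : HasDerivAt Φ (deriv Φ 0) 0 := hΦ0.hasDerivAt
  have hnum : HasDerivAt (fun z => Φ z - w0) (deriv Φ 0) 0 := hd1.sub_const w0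
  have hdenD : HasDerivAt (fun z => 1 - (starRingEnd ℂ) w0 * Φ z)
      (-((starRingEnd ℂ) w0 * deriv Φ 0)) 0 := (hd1.const_mul _).const_sub 1
  have hΨd : HasDerivAt Ψ ((deriv Φ 0 * (1 - (starRingEnd ℂ) w0 * Φ 0) -
      (Φ 0 - w0) * -((starRingEnd ℂ) w0 * deriv Φ 0)) / (1 - (starRingEnd ℂ) w0 * Φ 0) ^ 2) 0 :=
    hnum.div hdenD (hden w0 hw0n)
  have hc : (starRingEnd ℂ) w0 * w0 = (Complex.normSq w0 : ℂ) := by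
    rw [mul_comm, Complex.mul_conj]
  have hΨd' : deriv Ψ 0 = deriv Φ 0 / (1 - (Complex.normSq w0 : ℂ)) := by
    rw [hΨd.deriv, ← hw0, hc]
    have hne : (1 : ℂ) - (Complex.normSq w0 : ℂ) ≠ 0 := by
      rw [← hc]; exact hden w0 hw0n
    field_simp
    ring
  have hpos : (0:ℝ) < 1 - Complex.normSq w0 := by
    have := hnsq w0 hw0n; linarith
  have hnorm : ‖deriv Ψ 0‖ = ‖deriv Φ 0‖ / (1 - Complex.normSq w0) := by
    rw [hΨd', norm_div]
    congr 1
    rw [show ((1:ℂ) - (Complex.normSq w0 : ℂ)) = ((1 - Complex.normSq w0 : ℝ) : ℂ) by push_cast; ring,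
      Complex.norm_real]
    rw [Real.norm_eq_abs, abs_of_pos hpos]
  rw [hnorm] at hSch
  have : ‖deriv Φ 0‖ ≤ 1 - Complex.normSq w0 := by
    rw [div_le_div_iff₀ hpos one_pos] at hSch
    linarith
  have hsq : Complex.normSq w0 = ‖w0‖ ^ 2 := by
    rw [Complex.sq_norm]
  linarith [hsq ▸ this]

lemma aux_strip (ψ : ℂ → ℂ) (D : ℝ) (hD : 0 < D)
    (hψ : DifferentiableOn ℂ ψ (Metric.ball 0 1))
    (hre : ∀ z ∈ Metric.ball (0:ℂ) 1, |(ψ z).re| < D / 2) :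
    ‖deriv ψ 0‖ ≤ 2 * D / Real.pi := by
  have h0 : (0:ℂ) ∈ Metric.ball (0:ℂ) 1 := by simp
  set c : ℂ := ((Real.pi / D : ℝ) : ℂ) * Complex.I with hcdef
  set u : ℂ → ℂ := fun z => Complex.exp (c * ψ z) with hudef
  have him : ∀ z : ℂ, (c * ψ z).im = (Real.pi / D) * (ψ z).re := by
    intro z
    simp [hcdef, Complex.mul_im, Complex.mul_re]
  have hreu : ∀ z ∈ Metric.ball (0:ℂ) 1, 0 < (u z).re := by
    intro z hz
    rw [hudef]
    simp only []
    rw [Complex.exp_re, him z]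
    have hb := hre z hz
    have hbound : |(Real.pi / D) * (ψ z).re| < Real.pi / 2 := by
      rw [abs_mul, abs_of_pos (div_pos Real.pi_pos hD)]
      calc Real.pi / D * |(ψ z).re| < Real.pi / D * (D / 2) := by
            apply mul_lt_mul_of_pos_left hb (div_pos Real.pi_pos hD)
        _ = Real.pi / 2 := by field_simp
    have := abs_lt.mp hbound
    exact mul_pos (Real.exp_pos _) (Real.cos_pos_of_mem_Ioo ⟨this.1, this.2⟩)
  have hne : ∀ z ∈ Metric.ball (0:ℂ) 1, u z + 1 ≠ 0 := by
    intro z hz hc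
    have : (u z + 1).re = 0 := by rw [hc]; simp
    rw [Complex.add_re, Complex.one_re] at this
    linarith [hreu z hz]
  set Φ : ℂ → ℂ := fun z => (u z - 1) / (u z + 1) with hΦdef
  have hudiff : DifferentiableOn ℂ u (Metric.ball 0 1) := (hψ.const_mul c).cexp
  have hΦdiff : DifferentiableOn ℂ Φ (Metric.ball 0 1) :=
    (hudiff.sub_const 1).div (hudiff.add_const 1) hne
  have hΦlt : ∀ z ∈ Metric.ball (0:ℂ) 1, ‖Φ z‖ < 1 := by
    intro z hz
    have hlt : Complex.normSq (u z - 1) < Complex.normSq (u z + 1) := by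
      simp only [Complex.normSq_apply, Complex.sub_re, Complex.sub_im, Complex.add_re,
        Complex.add_im, Complex.one_re, Complex.one_im]
      nlinarith [hreu z hz]
    have hnormlt : ‖u z - 1‖ < ‖u z + 1‖ := by
      apply lt_of_pow_lt_pow_left₀ 2 (norm_nonneg _)
      rw [Complex.sq_norm, Complex.sq_norm]
      exact hlt
    rw [hΦdef]
    simp only [norm_div]
    rw [div_lt_one (lt_of_le_of_lt (norm_nonneg _) hnormlt)]
    exact hnormlt
  have hmob := aux_mobius Φ hΦdiff hΦlt
  -- derivative computations
  set P := deriv ψ 0 with hP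
  set u0 := u 0 with hu0
  have hψ0 : HasDerivAt ψ P 0 :=
    (hψ.differentiableAt (Metric.isOpen_ball.mem_nhds h0)).hasDerivAt
  have hu' : HasDerivAt u (Complex.exp (c * ψ 0) * (c * P)) 0 := (hψ0.const_mul c).cexp
  have huD : HasDerivAt u (u0 * (c * P)) 0 := hu'
  have hne0 : u0 + 1 ≠ 0 := hne 0 h0
  have hΦd : HasDerivAt Φ ((u0 * (c * P) * (u0 + 1) - (u0 - 1) * (u0 * (c * P))) / (u0 + 1) ^ 2)
      0 := (huD.sub_const 1).div (huD.add_const 1) hne0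
  have hΦderiv : deriv Φ 0 = 2 * u0 * c * P / (u0 + 1) ^ 2 := by
    rw [hΦd.deriv]; field_simp; ring
  have hΦ0 : Φ 0 = (u0 - 1) / (u0 + 1) := rfl
  have hsq : (1 : ℂ) - Φ 0 ^ 2 = 4 * u0 / (u0 + 1) ^ 2 := by
    rw [hΦ0]; field_simp; ring
  have hub : 1 - ‖Φ 0‖ ^ 2 ≤ ‖(1:ℂ) - Φ 0 ^ 2‖ := by
    calc 1 - ‖Φ 0‖ ^ 2 = ‖(1:ℂ)‖ - ‖Φ 0 ^ 2‖ := by rw [norm_one, norm_pow]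
      _ ≤ ‖(1:ℂ) - Φ 0 ^ 2‖ := norm_sub_norm_le _ _
  have hcn : ‖c‖ = Real.pi / D := by
    rw [hcdef, norm_mul, Complex.norm_I, mul_one, Complex.norm_real, Real.norm_eq_abs,
      abs_of_pos (div_pos Real.pi_pos hD)]
  have hu0pos : (0:ℝ) < ‖u0‖ := by
    rw [hu0]; simp only [hudef]
    exact norm_pos_iff.mpr (Complex.exp_ne_zero _)
  have hu1pos : (0:ℝ) < ‖u0 + 1‖ ^ 2 := pow_pos (norm_pos_iff.mpr hne0) 2
  have hlhs : ‖deriv Φ 0‖ = 2 * (Real.pi / D) * ‖P‖ * ‖u0‖ / ‖u0 + 1‖ ^ 2 := by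
    rw [hΦderiv]
    simp only [norm_div, norm_mul, norm_pow, hcn]
    norm_num
    ring
  have hrhs : ‖(1:ℂ) - Φ 0 ^ 2‖ = 4 * ‖u0‖ / ‖u0 + 1‖ ^ 2 := by
    rw [hsq]
    simp only [norm_div, norm_mul, norm_pow]
    norm_num
  rw [hlhs] at hmob
  have hfin : 2 * (Real.pi / D) * ‖P‖ * ‖u0‖ / ‖u0 + 1‖ ^ 2 ≤ 4 * ‖u0‖ / ‖u0 + 1‖ ^ 2 := by
    calc 2 * (Real.pi / D) * ‖P‖ * ‖u0‖ / ‖u0 + 1‖ ^ 2 ≤ 1 - ‖Φ 0‖ ^ 2 := hmob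
      _ ≤ ‖(1:ℂ) - Φ 0 ^ 2‖ := hub
      _ = 4 * ‖u0‖ / ‖u0 + 1‖ ^ 2 := hrhs
  rw [div_le_div_iff_of_pos_right hu1pos] at hfin
  have h2 : 2 * (Real.pi / D) * ‖P‖ ≤ 4 := by
    have := le_of_mul_le_mul_right hfin hu0pos
    linarith
  have hπ : (0:ℝ) < Real.pi := Real.pi_pos
  rw [le_div_iff₀ hπ]
  have hD' : D ≠ 0 := ne_of_gt hD
  calc ‖P‖ * Real.pi = (2 * (Real.pi / D) * ‖P‖) * (D / 2) := by field_simp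
    _ ≤ 4 * (D / 2) := by
        apply mul_le_mul_of_nonneg_right h2
        positivity
    _ = 2 * D := by ring

lemma aux_deriv_log (d' : ℝ) (hd' : 0 < d') :
    ‖deriv (fun z : ℂ =>
        -Complex.I * ((d' : ℂ) / (2 * Real.pi)) * Complex.log ((1 + z) / (1 - z))) 0‖
      = d' / Real.pi := by
  have hnum : HasDerivAt (fun z : ℂ => 1 + z) 1 0 := by
    simpa using (hasDerivAt_id (0:ℂ)).const_add 1
  have hden : HasDerivAt (fun z : ℂ => 1 - z) (-1) 0 := by
    simpa using (hasDerivAt_id (0:ℂ)).const_sub 1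
  have hq : HasDerivAt (fun z : ℂ => (1 + z) / (1 - z))
      ((1 * (1 - 0) - (1 + 0) * (-1)) / (1 - 0) ^ 2) 0 := hnum.div hden (by norm_num)
  have hq2 : HasDerivAt (fun z : ℂ => (1 + z) / (1 - z)) 2 0 := by
    convert hq using 1; norm_num
  have hq0 : ((1:ℂ) + 0) / (1 - 0) = 1 := by norm_num
  have hlog : HasDerivAt Complex.log ((1:ℂ))⁻¹ (((1:ℂ) + 0) / (1 - 0)) := by
    rw [hq0]
    exact Complex.hasDerivAt_log (by simp [Complex.mem_slitPlane_iff])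
  have hcomp : HasDerivAt (fun z : ℂ => Complex.log ((1 + z) / (1 - z))) ((1:ℂ)⁻¹ * 2) 0 :=
    HasDerivAt.comp (h₂ := Complex.log) 0 hlog hq2
  have hF : HasDerivAt (fun z : ℂ =>
      -Complex.I * ((d' : ℂ) / (2 * Real.pi)) * Complex.log ((1 + z) / (1 - z)))
      (-Complex.I * ((d' : ℂ) / (2 * Real.pi)) * ((1:ℂ)⁻¹ * 2)) 0 := hcomp.const_mul _
  rw [hF.deriv]
  have hπ : (Real.pi : ℝ) ≠ 0 := ne_of_gt Real.pi_pos
  have hval : -Complex.I * ((d' : ℂ) / (2 * Real.pi)) * ((1:ℂ)⁻¹ * 2)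
      = -Complex.I * ((d':ℂ) / (Real.pi:ℂ)) := by
    have hπ' : (Real.pi:ℂ) ≠ 0 := by exact_mod_cast hπ
    field_simp
  rw [hval, norm_mul, norm_neg, Complex.norm_I, one_mul,
    show ((d':ℂ)/(Real.pi:ℂ)) = ((d'/Real.pi : ℝ) : ℂ) by push_cast; ring,
    Complex.norm_real, Real.norm_eq_abs, abs_of_pos (div_pos hd' Real.pi_pos)]

lemma aux_image (d' : ℝ) (hd' : 0 < d') :
    (fun z : ℂ => (d' / Real.pi) * Complex.arg ((1 + z) / (1 - z))) '' Metric.ball 0 1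
      = Set.Ioo (-(d'/2)) (d'/2) := by
  have hπ : (0:ℝ) < Real.pi := Real.pi_pos
  ext y
  constructor
  · rintro ⟨z, hz, rfl⟩
    rw [Metric.mem_ball, dist_zero_right] at hz
    have hz1 : (1:ℂ) - z ≠ 0 := by
      intro hc
      have : z = 1 := by linear_combination -hc
      rw [this] at hz; norm_num at hz
    have hre : 0 < (((1:ℂ) + z) / (1 - z)).re := by
      rw [Complex.div_re]
      have hns : 0 < Complex.normSq (1 - z) := Complex.normSq_pos.mpr hz1
      have hz2 : Complex.normSq z < 1 := by
        have h := hz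
        nlinarith [Complex.normSq_eq_norm_sq z, norm_nonneg z]
      rw [← add_div, lt_div_iff₀ hns]
      simp only [Complex.add_re, Complex.sub_re, Complex.add_im, Complex.sub_im,
        Complex.one_re, Complex.one_im, Complex.normSq_apply] at *
      nlinarith
    have harg : |Complex.arg (((1:ℂ) + z) / (1 - z))| < Real.pi / 2 :=
      Complex.abs_arg_lt_pi_div_two_iff.mpr (Or.inl hre)
    obtain ⟨ha1, ha2⟩ := abs_lt.mp harg
    have hpos : 0 < d' / Real.pi := div_pos hd' hπ
    simp only []
    constructor
    · calc -(d'/2) = d'/Real.pi * (-(Real.pi/2)) := by field_simp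
        _ < d'/Real.pi * Complex.arg ((1+z)/(1-z)) := mul_lt_mul_of_pos_left ha1 hpos
    · calc d'/Real.pi * Complex.arg ((1+z)/(1-z)) < d'/Real.pi * (Real.pi/2) :=
          mul_lt_mul_of_pos_left ha2 hpos
        _ = d'/2 := by field_simp
  · rintro ⟨hy1, hy2⟩
    set θ := Real.pi * y / d' with hθdef
    have hθ1 : -(Real.pi/2) < θ := by
      rw [hθdef]; rw [lt_div_iff₀ hd']; nlinarith
    have hθ2 : θ < Real.pi/2 := by
      rw [hθdef]; rw [div_lt_iff₀ hd']; nlinarith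
    have hcos : 0 < Real.cos θ := Real.cos_pos_of_mem_Ioo ⟨hθ1, hθ2⟩
    set w : ℂ := Complex.cos θ + Complex.sin θ * Complex.I with hwdef
    have hwre : w.re = Real.cos θ := by
      simp [hwdef, Complex.cos_ofReal_re]
    have hwim : w.im = Real.sin θ := by
      simp [hwdef, Complex.cos_ofReal_im, Complex.sin_ofReal_re]
    have hargw : Complex.arg w = θ :=
      Complex.arg_cos_add_sin_mul_I ⟨by linarith, by linarith⟩
    have hw1 : w + 1 ≠ 0 := by
      intro hc
      have : (w + 1).re = 0 := by rw [hc]; simp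
      rw [Complex.add_re, Complex.one_re, hwre] at this
      linarith
    set z : ℂ := (w - 1) / (w + 1) with hzdef
    have hsincos : Real.sin θ ^ 2 + Real.cos θ ^ 2 = 1 := Real.sin_sq_add_cos_sq θ
    have hzlt : ‖z‖ < 1 := by
      rw [hzdef, norm_div, div_lt_one (norm_pos_iff.mpr hw1)]
      apply lt_of_pow_lt_pow_left₀ 2 (norm_nonneg _)
      rw [Complex.sq_norm, Complex.sq_norm]
      simp only [Complex.normSq_apply, Complex.sub_re, Complex.sub_im, Complex.add_re,
        Complex.add_im, Complex.one_re, Complex.one_im, hwre, hwim]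
      nlinarith
    refine ⟨z, by rwa [Metric.mem_ball, dist_zero_right], ?_⟩
    have hz1 : (1:ℂ) - z ≠ 0 := by
      rw [hzdef]
      intro hc
      rw [sub_eq_zero] at hc
      field_simp at hc
      have h2 : (2:ℂ) = 0 := by linear_combination hc
      norm_num at h2
    have hquot : ((1:ℂ) + z) / (1 - z) = w := by
      rw [hzdef]
      field_simp
      ring
    show d' / Real.pi * Complex.arg ((1 + z) / (1 - z)) = y
    rw [hquot, hargw, hθdef]
    field_simp

/-- Diameter estimate: if `f = g + conj h` is harmonic on `𝔻` with image of finite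
diameter `d`, then `π·Λ_f(0) = π·(|g'(0)| + |h'(0)|) ≤ 2d`.  Equality holds for the
function `u_d(z) = (d/π)·arg ((1+z)/(1-z))`, whose canonical decomposition has
`g = h = -i (d/(2π)) log ((1+z)/(1-z))`. -/
theorem harmonic_diameter_estimate (f g h : ℂ → ℂ) (d : ℝ)
    (hg : DifferentiableOn ℂ g (Metric.ball 0 1))
    (hh : DifferentiableOn ℂ h (Metric.ball 0 1))
    (hf : ∀ z ∈ Metric.ball (0 : ℂ) 1, f z = g z + (starRingEnd ℂ) (h z))
    (hbdd : Bornology.IsBounded (f '' Metric.ball 0 1))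
    (hd : Metric.diam (f '' Metric.ball 0 1) = d) :
    Real.pi * (‖deriv g 0‖ + ‖deriv h 0‖) ≤ 2 * d ∧
    (∀ d' : ℝ, 0 < d' →
      Real.pi *
          (2 * ‖deriv (fun z : ℂ =>
              -Complex.I * ((d' : ℂ) / (2 * Real.pi)) * Complex.log ((1 + z) / (1 - z))) 0‖) =
        2 * Metric.diam
          ((fun z : ℂ => (d' / Real.pi) * Complex.arg ((1 + z) / (1 - z))) ''
            Metric.ball 0 1)) := by
  constructor
  · -- Part 1: the diameter estimate
    have h0 : (0:ℂ) ∈ Metric.ball (0:ℂ) 1 := by simp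
    have hd0 : 0 ≤ d := hd ▸ Metric.diam_nonneg
    set G0 := deriv g 0 with hG0
    set H0 := deriv h 0 with hH0
    set a := Complex.arg G0 with ha
    set b := Complex.arg H0 with hb
    set θ : ℝ := (b - a) / 2 with hθ
    set l : ℂ := Complex.exp ((θ:ℂ) * Complex.I) with hl
    have hll : ‖l‖ = 1 := Complex.norm_exp_ofReal_mul_I θ
    have hcl : (starRingEnd ℂ) l = Complex.exp (((-θ : ℝ):ℂ) * Complex.I) := by
      rw [hl, ← Complex.exp_conj]
      congr 1
      simp
    set m : ℂ := Complex.exp ((((a+b)/2 : ℝ) : ℂ) * Complex.I) with hm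
    have e1 : l * G0 = (‖G0‖ : ℂ) * m := by
      conv_lhs => rw [← Complex.norm_mul_exp_arg_mul_I G0]
      rw [mul_left_comm, hl, ← Complex.exp_add, hm]
      congr 2
      push_cast
      rw [hθ]
      push_cast
      ring
    have e2 : (starRingEnd ℂ) l * H0 = (‖H0‖ : ℂ) * m := by
      conv_lhs => rw [← Complex.norm_mul_exp_arg_mul_I H0]
      rw [mul_left_comm, hcl, ← Complex.exp_add, hm]
      congr 2
      push_cast
      rw [hθ]
      push_cast
      ring
    have hkey : ‖l * G0 + (starRingEnd ℂ) l * H0‖ = ‖G0‖ + ‖H0‖ := by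
      rw [e1, e2, ← add_mul]
      rw [norm_mul]
      have : ‖m‖ = 1 := by rw [hm]; exact Complex.norm_exp_ofReal_mul_I _
      rw [this, mul_one]
      rw [show ((‖G0‖ : ℂ) + (‖H0‖ : ℂ))
            = (((‖G0‖ + ‖H0‖ : ℝ)) : ℂ) by push_cast; ring]
      rw [Complex.norm_real, Real.norm_eq_abs,
        _root_.abs_of_nonneg (by positivity : (0:ℝ) ≤ ‖G0‖ + ‖H0‖)]
    set ψ : ℂ → ℂ := fun z => l * g z + (starRingEnd ℂ) l * h z with hψdef
    have hψdiff : DifferentiableOn ℂ ψ (Metric.ball 0 1) :=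
      (hg.const_mul l).add (hh.const_mul _)
    have hgd : HasDerivAt g G0 0 := (hg.differentiableAt (Metric.isOpen_ball.mem_nhds h0)).hasDerivAt
    have hhd : HasDerivAt h H0 0 := (hh.differentiableAt (Metric.isOpen_ball.mem_nhds h0)).hasDerivAt
    have hderivψ : deriv ψ 0 = l * G0 + (starRingEnd ℂ) l * H0 :=
      ((hgd.const_mul l).add (hhd.const_mul _)).deriv
    have hRe : ∀ z ∈ Metric.ball (0:ℂ) 1, (ψ z).re = (l * f z).re := by
      intro z hz
      rw [hf z hz, mul_add, Complex.add_re]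
      show (l * g z).re + ((starRingEnd ℂ) l * h z).re = _
      rw [Complex.add_re]
      congr 1
      simp only [Complex.mul_re, Complex.conj_re, Complex.conj_im]
      ring
    have htwo : ∀ z ∈ Metric.ball (0:ℂ) 1, ∀ w ∈ Metric.ball (0:ℂ) 1,
        (ψ z).re - (ψ w).re ≤ d := by
      intro z hz w hw
      rw [hRe z hz, hRe w hw]
      have h1 : (l * f z).re - (l * f w).re = (l * f z - l * f w).re := by
        rw [Complex.sub_re]
      rw [h1]
      calc (l * f z - l * f w).re ≤ |(l * f z - l * f w).re| := le_abs_self _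
        _ ≤ ‖l * f z - l * f w‖ := Complex.abs_re_le_norm _
        _ = ‖l‖ * ‖f z - f w‖ := by rw [← mul_sub, norm_mul]
        _ = dist (f z) (f w) := by rw [hll, one_mul, Complex.dist_eq]
        _ ≤ Metric.diam (f '' Metric.ball 0 1) :=
            Metric.dist_le_diam_of_mem hbdd ⟨z, hz, rfl⟩ ⟨w, hw, rfl⟩
        _ = d := hd
    set S := (fun z => (ψ z).re) '' Metric.ball 0 1 with hS
    have hSne : S.Nonempty := ⟨(ψ 0).re, ⟨0, h0, rfl⟩⟩
    have hbddA : BddAbove S := by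
      refine ⟨(ψ 0).re + d, ?_⟩
      rintro s ⟨z, hz, rfl⟩
      linarith [htwo z hz 0 h0]
    have hbddB : BddBelow S := by
      refine ⟨(ψ 0).re - d, ?_⟩
      rintro s ⟨z, hz, rfl⟩
      linarith [htwo 0 h0 z hz]
    set A := sInf S with hA
    set B := sSup S with hB
    have hBA : B ≤ A + d := by
      apply csSup_le hSne
      rintro s ⟨z, hz, rfl⟩
      have : (ψ z).re - d ≤ A := by
        apply le_csInf hSne
        rintro t ⟨w, hw, rfl⟩
        linarith [htwo z hz w hw]
      linarith
    refine le_of_forall_pos_le_add ?_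
    intro ε hε
    set D := d + ε / 2 with hD'
    have hDpos : 0 < D := by rw [hD']; linarith
    set χ : ℂ → ℂ := fun z => ψ z - (((A+B)/2 : ℝ) : ℂ) with hχdef
    have hχdiff : DifferentiableOn ℂ χ (Metric.ball 0 1) := hψdiff.sub_const _
    have hχre : ∀ z ∈ Metric.ball (0:ℂ) 1, |(χ z).re| < D / 2 := by
      intro z hz
      have h1 : (χ z).re = (ψ z).re - (A+B)/2 := by
        rw [hχdef]
        show (ψ z - (((A+B)/2 : ℝ) : ℂ)).re = _
        rw [Complex.sub_re, Complex.ofReal_re]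
      rw [h1, abs_lt]
      have hAz : A ≤ (ψ z).re := csInf_le hbddB ⟨z, hz, rfl⟩
      have hBz : (ψ z).re ≤ B := le_csSup hbddA ⟨z, hz, rfl⟩
      constructor
      · rw [hD']; linarith
      · rw [hD']; linarith
    have hstrip := aux_strip χ D hDpos hχdiff hχre
    have hχd : deriv χ 0 = deriv ψ 0 := by
      rw [hχdef]
      exact deriv_sub_const _
    rw [hχd, hderivψ, hkey] at hstrip
    have hπ : (0:ℝ) < Real.pi := Real.pi_pos
    calc Real.pi * (‖G0‖ + ‖H0‖) ≤ Real.pi * (2 * D / Real.pi) :=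
          mul_le_mul_of_nonneg_left hstrip (le_of_lt hπ)
      _ = 2 * D := by field_simp
      _ = 2 * d + ε := by rw [hD']; ring
  · -- Part 2: equality case
    intro d' hd'
    rw [aux_deriv_log d' hd', aux_image d' hd', Real.diam_Ioo (by linarith : -(d'/2) ≤ d'/2)]
    have hπ : (Real.pi : ℝ) ≠ 0 := ne_of_gt Real.pi_pos
    field_simp
    norm_num
end

section
/- If u : 𝔻 → ℝ^m is harmonic, then |u| and |u'_t| (the norm of the angular derivative) are subharmonic functions on 𝔻, and consequently the length L(r) of the curve t ↦ u(re^{it}) and the diameter d(r) of u(D_r) are nondecreasing in r ∈ [0,1). -/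
open Real Set Metric Complex

/-- A function `v` is subharmonic on `s` if it is continuous on `s` and satisfies the
sub-mean-value inequality on every closed disk contained in `s`. -/
def SubharmonicOn (v : ℂ → ℝ) (s : Set ℂ) : Prop :=
  ContinuousOn v s ∧
    ∀ c ∈ s, ∀ r : ℝ, 0 < r → Metric.closedBall c r ⊆ s →
      v c ≤ (2 * Real.pi)⁻¹ * ∫ t in (0 : ℝ)..(2 * Real.pi), v (c + r * Complex.exp (t * Complex.I))

open MeasureTheory intervalIntegral

noncomputable def reMap (m : ℕ) : EuclideanSpace ℂ (Fin m) →L[ℝ] EuclideanSpace ℝ (Fin m) :=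
  LinearMap.toContinuousLinearMap
    { toFun := fun v => WithLp.toLp 2 (fun i => (v i).re)
      map_add' := fun v w => by ext i; simp
      map_smul' := fun r v => by ext i; exact Complex.smul_re r (v i) }

@[simp] lemma reMap_apply (m : ℕ) (v : EuclideanSpace ℂ (Fin m)) (i : Fin m) :
    reMap m v i = (v i).re := rfl

lemma reMap_coe_smul (m : ℕ) (r : ℝ) (v : EuclideanSpace ℂ (Fin m)) :
    reMap m ((r : ℂ) • v) = r • reMap m v := by
  ext i
  show ((r : ℂ) * v i).re = r * (v i).re
  simp [Complex.mul_re]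

/-- Mean value property for a holomorphic function on a closed disk. -/
theorem meanValue {E : Type*} [NormedAddCommGroup E] [NormedSpace ℂ E] [CompleteSpace E]
    {g : ℂ → E} {c : ℂ} {r : ℝ} (hr : 0 < r)
    (hc : ContinuousOn g (closedBall c r))
    (hd : ∀ z ∈ ball c r, DifferentiableAt ℂ g z) :
    g c = (2 * π : ℝ)⁻¹ • ∫ t in (0:ℝ)..(2*π), g (c + r * Complex.exp (t * Complex.I)) := by
  have h := circleIntegral_sub_center_inv_smul_of_differentiable_on_off_countable hr
    Set.countable_empty hc (fun z hz => hd z hz.1)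
  rw [circleIntegral] at h
  have hne : ∀ θ : ℝ, circleMap 0 r θ ≠ 0 := fun θ => circleMap_ne_center hr.ne'
  have key : ∀ θ : ℝ, deriv (circleMap c r) θ • ((circleMap c r θ - c)⁻¹ • g (circleMap c r θ))
      = I • g (c + r * Complex.exp (θ * Complex.I)) := by
    intro θ
    rw [deriv_circleMap, circleMap_sub_center, smul_smul, mul_right_comm, mul_inv_cancel₀ (hne θ), one_mul]
    rfl
  simp only [key] at h
  rw [intervalIntegral.integral_smul] at h
  have h2 : g c = (2 * π * I : ℂ)⁻¹ • (2 * π * I : ℂ) • g c := by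
    rw [inv_smul_smul₀]
    simp [Real.pi_ne_zero, I_ne_zero]
  rw [h2, ← h, smul_smul]
  have hs : (2 * π * I : ℂ)⁻¹ * I = (((2 * π : ℝ)⁻¹ : ℝ) : ℂ) := by
    rw [mul_inv, mul_assoc, inv_mul_cancel₀ I_ne_zero, mul_one]
    push_cast
    ring
  rw [hs, Complex.coe_smul]

lemma kernel_eq {R : ℝ} (hR : 0 < R) {z w : ℂ} (hz : ‖z‖ = R) (hzw : z ≠ w) :
    (z - w)⁻¹ + (starRingEnd ℂ) w * ((R:ℂ)^2 - (starRingEnd ℂ) w * z)⁻¹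
      = (((R^2 - ‖w‖^2) / ‖(z-w)‖^2 : ℝ) : ℂ) * z⁻¹ := by
  have hz0 : z ≠ 0 := by
    intro h; rw [h] at hz; simp at hz; exact hR.ne (by rw [hz])
  have h1 : z * (starRingEnd ℂ) z = (R:ℂ)^2 := by
    rw [Complex.mul_conj, ← Complex.sq_norm, hz]; push_cast; ring
  have ha : z - w ≠ 0 := sub_ne_zero.mpr hzw
  have hac : (starRingEnd ℂ) (z - w) ≠ 0 := fun h => ha (by rwa [map_eq_zero] at h)
  have h2 : ((R:ℂ)^2 - (starRingEnd ℂ) w * z) = z * (starRingEnd ℂ) (z - w) := by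
    rw [map_sub, ← h1]; ring
  rw [h2, show (((R^2 - ‖w‖^2) / ‖(z-w)‖^2 : ℝ) : ℂ)
      = (z * (starRingEnd ℂ) z - w * (starRingEnd ℂ) w) / ((z - w) * (starRingEnd ℂ) (z - w)) by
    rw [Complex.mul_conj, Complex.mul_conj, Complex.mul_conj, ← Complex.sq_norm,
      ← Complex.sq_norm, ← Complex.sq_norm, hz]
    push_cast; ring]
  rw [map_sub] at hac ⊢
  generalize (starRingEnd ℂ) z = a at *
  generalize (starRingEnd ℂ) w = b at *
  field_simp
  ring

/-- Poisson representation for a holomorphic function on a closed disk centered at 0. -/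
theorem poisson {E : Type*} [NormedAddCommGroup E] [NormedSpace ℂ E] [CompleteSpace E]
    {g : ℂ → E} {R : ℝ} (hR : 0 < R)
    (hc : ContinuousOn g (closedBall 0 R))
    (hd : ∀ z ∈ ball (0:ℂ) R, DifferentiableAt ℂ g z)
    {w : ℂ} (hw : w ∈ ball (0:ℂ) R) :
    g w = (2 * π : ℝ)⁻¹ • ∫ s in (0:ℝ)..(2*π),
      ((R^2 - ‖w‖^2) / ‖(circleMap 0 R s - w)‖^2 : ℝ) • g (circleMap 0 R s) := by
  have hwR : ‖w‖ < R := by simpa [Complex.dist_eq] using mem_ball.mp hw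
  have hden : ∀ z ∈ closedBall (0:ℂ) R, ((R:ℂ)^2 - (starRingEnd ℂ) w * z) ≠ 0 := by
    intro z hz h0
    have h1 : ((R:ℂ)^2) = (starRingEnd ℂ) w * z := by linear_combination h0
    have h2 : (R:ℝ)^2 = ‖w‖ * ‖z‖ := by
      have := congrArg (‖·‖) h1
      simpa [norm_mul, Complex.norm_conj, abs_of_pos hR] using this
    have hzR : ‖z‖ ≤ R := by simpa [Complex.dist_eq] using mem_closedBall.mp hz
    nlinarith [norm_nonneg z, norm_nonneg w]
  -- Cauchy integral formula
  have hCauchy : (∮ z in C(0, R), (z - w)⁻¹ • g z) = (2 * π * I : ℂ) • g w :=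
    circleIntegral_sub_inv_smul_of_differentiable_on_off_countable Set.countable_empty hw hc
      (fun z hz => hd z hz.1)
  -- Cauchy-Goursat for the reflected kernel
  have hcontk : ContinuousOn (fun z => (starRingEnd ℂ) w * ((R:ℂ)^2 - (starRingEnd ℂ) w * z)⁻¹)
      (closedBall (0:ℂ) R) :=
    continuousOn_const.mul ((continuousOn_const.sub (continuousOn_const.mul continuousOn_id)).inv₀ hden)
  have hZero : (∮ z in C(0, R),
      ((starRingEnd ℂ) w * ((R:ℂ)^2 - (starRingEnd ℂ) w * z)⁻¹) • g z) = 0 := by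
    refine circleIntegral_eq_zero_of_differentiable_on_off_countable hR.le Set.countable_empty
      (hcontk.smul hc) (fun z hz => ?_)
    have hk : DifferentiableAt ℂ (fun z => (starRingEnd ℂ) w * ((R:ℂ)^2 - (starRingEnd ℂ) w * z)⁻¹) z :=
      ((differentiableAt_const _).mul (((differentiableAt_const _).sub
      ((differentiableAt_const _).mul differentiableAt_id)).inv
      (hden z (ball_subset_closedBall hz.1))))
    exact hk.smul (hd z hz.1)
  -- circle integrability of both integrands
  have hne : ∀ θ : ℝ, circleMap 0 R θ ≠ w := fun θ => circleMap_ne_mem_ball hw θ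
  have habs : ∀ θ : ℝ, ‖(circleMap 0 R θ)‖ = R := by
    intro θ; rw [norm_circleMap_zero, abs_of_pos hR]
  have hsub : (sphere (0:ℂ) R) ⊆ closedBall 0 R := sphere_subset_closedBall
  have hI1 : CircleIntegrable (fun z => (z - w)⁻¹ • g z) 0 R := by
    refine ContinuousOn.circleIntegrable hR.le ?_
    exact ((continuousOn_id.sub continuousOn_const).inv₀
      (fun z hz => sub_ne_zero.mpr (fun h => by
        simp only [id_eq] at h
        rw [mem_sphere] at hz; rw [h] at hz; rw [mem_ball, hz] at hw
        exact lt_irrefl _ hw))).smul (hc.mono hsub)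
  have hI2 : CircleIntegrable
      (fun z => ((starRingEnd ℂ) w * ((R:ℂ)^2 - (starRingEnd ℂ) w * z)⁻¹) • g z) 0 R :=
    ContinuousOn.circleIntegrable hR.le ((hcontk.mono hsub).smul (hc.mono hsub))
  rw [circleIntegral] at hCauchy hZero
  have hsum := intervalIntegral.integral_add hI1.out hI2.out
  rw [hCauchy, hZero, add_zero] at hsum
  -- pointwise identification with the Poisson kernel
  have key : ∀ θ : ℝ,
      (deriv (circleMap 0 R) θ • (circleMap 0 R θ - w)⁻¹ • g (circleMap 0 R θ) +
        deriv (circleMap 0 R) θ •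
          ((starRingEnd ℂ) w * ((R:ℂ)^2 - (starRingEnd ℂ) w * circleMap 0 R θ)⁻¹) •
            g (circleMap 0 R θ))
      = I • (((R^2 - ‖w‖^2) / ‖(circleMap 0 R θ - w)‖^2 : ℝ) •
          g (circleMap 0 R θ)) := by
    intro θ
    set z := circleMap 0 R θ with hzdef
    have hz0 : z ≠ 0 := by
      intro h; have := habs θ; rw [← hzdef, h] at this; simp at this; exact hR.ne (by rw [this])
    rw [deriv_circleMap, ← hzdef, smul_smul, smul_smul, ← add_smul, ← mul_add,
      kernel_eq hR (habs θ) (hne θ), ← Complex.coe_smul, smul_smul]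
    congr 1
    have hzw0 : (‖(z - w)‖ : ℂ) ≠ 0 := by
      simp only [ne_eq, Complex.ofReal_eq_zero, norm_eq_zero]
      exact sub_ne_zero.mpr (hne θ)
    rw [← hzdef]
    linear_combination (I * (((R^2 - ‖w‖^2) / ‖z - w‖^2 : ℝ) : ℂ)) * mul_inv_cancel₀ hz0
  simp only [key] at hsum
  rw [intervalIntegral.integral_smul] at hsum
  have h2 : g w = (2 * π * I : ℂ)⁻¹ • (2 * π * I : ℂ) • g w := by
    rw [inv_smul_smul₀]
    simp [Real.pi_ne_zero, I_ne_zero]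
  rw [h2, ← hsum, smul_smul]
  have hs : (2 * π * I : ℂ)⁻¹ * I = (((2 * π : ℝ)⁻¹ : ℝ) : ℂ) := by
    rw [mul_inv, mul_assoc, inv_mul_cancel₀ I_ne_zero, mul_one]
    push_cast
    ring
  rw [hs, Complex.coe_smul]

lemma circleMap_mem_ball' {R : ℝ} (hR : R < 1) (hR0 : 0 ≤ R) (t : ℝ) :
    circleMap 0 R t ∈ Metric.ball (0:ℂ) 1 := by
  simp only [mem_ball, Complex.dist_eq, sub_zero, norm_circleMap_zero, _root_.abs_of_nonneg hR0]
  exact hR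

/-- Generic subharmonicity of `‖Re G‖` for `G` holomorphic on the unit ball. -/
lemma subharmonic_reMap (m : ℕ) (G : ℂ → EuclideanSpace ℂ (Fin m))
    (hG : DifferentiableOn ℂ G (Metric.ball 0 1)) :
    SubharmonicOn (fun z => ‖reMap m (G z)‖) (Metric.ball 0 1) := by
  constructor
  · exact ((reMap m).continuous.comp_continuousOn hG.continuousOn).norm
  intro c hc r hr hsubset
  have hcont : ContinuousOn G (closedBall c r) := hG.continuousOn.mono hsubset
  have hdiff : ∀ z ∈ ball c r, DifferentiableAt ℂ G z := fun z hz =>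
    hG.differentiableAt (isOpen_ball.mem_nhds (hsubset (ball_subset_closedBall hz)))
  have mv := meanValue hr hcont hdiff
  have hpath : Continuous fun t : ℝ => G (c + r * Complex.exp (t * Complex.I)) := by
    refine hcont.comp_continuous (by continuity) (fun t => ?_)
    exact circleMap_mem_closedBall c hr.le t
  have hint : IntervalIntegrable (fun t : ℝ => G (c + r * Complex.exp (t * Complex.I)))
      volume 0 (2*π) := hpath.intervalIntegrable _ _
  calc ‖reMap m (G c)‖
      = (2*π)⁻¹ * ‖∫ t in (0:ℝ)..(2*π), reMap m (G (c + r * Complex.exp (t * Complex.I)))‖ := by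
        rw [mv, _root_.map_smul, ← ContinuousLinearMap.intervalIntegral_comp_comm _ hint, norm_smul]
        simp [Real.pi_pos.le, abs_of_nonneg, Real.pi_nonneg]
    _ ≤ (2*π)⁻¹ * ∫ t in (0:ℝ)..(2*π), ‖reMap m (G (c + r * Complex.exp (t * Complex.I)))‖ := by
        gcongr
        exact intervalIntegral.norm_integral_le_integral_norm (by positivity)

lemma re_kernel {R : ℝ} {z w : ℂ} (hz : ‖z‖ = R) :
    ((z + w) * (z - w)⁻¹).re = (R^2 - ‖w‖^2) / ‖(z - w)‖^2 := by
  have h1 : R^2 = z.re^2 + z.im^2 := by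
    rw [← hz, Complex.sq_norm, Complex.normSq_apply]; ring
  have h2 : ‖w‖^2 = w.re^2 + w.im^2 := by
    rw [Complex.sq_norm, Complex.normSq_apply]; ring
  have h3 : ‖(z-w)‖^2 = Complex.normSq (z-w) := Complex.sq_norm _
  rw [← div_eq_mul_inv, Complex.div_re, ← add_div, h3, h1, h2]
  congr 1
  simp only [Complex.add_re, Complex.add_im, Complex.sub_re, Complex.sub_im]
  ring

lemma poisson_kernel_integral {r₁ R : ℝ} (h0 : 0 < r₁) (h12 : r₁ < R) {z : ℂ}
    (hz : ‖z‖ = R) :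
    ∫ t in (0:ℝ)..(2*π),
      (R^2 - ‖(circleMap 0 r₁ t)‖^2) / ‖(z - circleMap 0 r₁ t)‖^2 = 2*π := by
  set q : ℂ → ℂ := fun w => (z + w) * (z - w)⁻¹ with hq
  have hz0 : z ≠ 0 := by
    intro h; rw [h] at hz; simp at hz; exact (h0.trans h12).ne (by rw [hz])
  have hne : ∀ w : ℂ, w ∈ closedBall (0:ℂ) r₁ → z - w ≠ 0 := by
    intro w hw h
    have hwz : ‖w‖ ≤ r₁ := by simpa [Complex.dist_eq] using mem_closedBall.mp hw
    have : z = w := by linear_combination h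
    rw [this] at hz
    exact absurd (hz ▸ hwz) (not_le.mpr h12)
  have hcont : ContinuousOn q (closedBall (0:ℂ) r₁) :=
    (continuousOn_const.add continuousOn_id).mul
      ((continuousOn_const.sub continuousOn_id).inv₀ (fun w hw => by
        simpa using hne w hw))
  have hdiff : ∀ w ∈ ball (0:ℂ) r₁, DifferentiableAt ℂ q w := by
    intro w hw
    exact ((differentiableAt_const _).add differentiableAt_id).mul
      (((differentiableAt_const _).sub differentiableAt_id).inv
        (by simpa using hne w (ball_subset_closedBall hw)))
  have mv := meanValue (g := q) h0 hcont hdiff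
  have hq0 : q 0 = 1 := by
    simp only [hq, add_zero, sub_zero]
    exact mul_inv_cancel₀ hz0
  have hre := congrArg Complex.re mv
  have hint : IntervalIntegrable (fun t : ℝ => q ((0:ℂ) + r₁ * Complex.exp (t * Complex.I)))
      volume 0 (2*π) := by
    refine (hcont.comp_continuous (by continuity) (fun t => ?_)).intervalIntegrable _ _
    simpa using circleMap_mem_closedBall (0:ℂ) h0.le t
  rw [hq0, Complex.one_re, Complex.smul_re] at hre
  have hswap : (∫ t in (0:ℝ)..(2*π), q ((0:ℂ) + r₁ * Complex.exp (t * Complex.I))).re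
      = ∫ t in (0:ℝ)..(2*π), (q ((0:ℂ) + r₁ * Complex.exp (t * Complex.I))).re := by
    exact (Complex.reCLM.intervalIntegral_comp_comm hint).symm
  rw [hswap] at hre
  have hptw : ∀ t : ℝ, (q ((0:ℂ) + r₁ * Complex.exp (t * Complex.I))).re
      = (R^2 - ‖(circleMap 0 r₁ t)‖^2) / ‖(z - circleMap 0 r₁ t)‖^2 := by
    intro t
    have : (0:ℂ) + r₁ * Complex.exp (t * Complex.I) = circleMap 0 r₁ t := by
      simp [circleMap]
    rw [this]
    exact re_kernel hz
  simp only [hptw] at hre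
  rw [smul_eq_mul, eq_comm, inv_mul_eq_one₀ (by positivity : (2*π:ℝ) ≠ 0)] at hre
  exact hre.symm

lemma mono_L (m : ℕ) (G : ℂ → EuclideanSpace ℂ (Fin m))
    (hG : DifferentiableOn ℂ G (Metric.ball 0 1)) :
    MonotoneOn (fun r : ℝ => ∫ t in (0:ℝ)..(2*π), ‖reMap m (G (circleMap 0 r t))‖)
      (Set.Ico (0:ℝ) 1) := by
  intro r₁ hr₁ r₂ hr₂ h12
  rcases eq_or_lt_of_le h12 with rfl | hlt
  · exact le_rfl
  have hr₂0 : 0 < r₂ := lt_of_le_of_lt hr₁.1 hlt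
  have hsub2 : closedBall (0:ℂ) r₂ ⊆ ball 0 1 := closedBall_subset_ball hr₂.2
  have hGcb : ContinuousOn G (closedBall (0:ℂ) r₂) := hG.continuousOn.mono hsub2
  have hGdiff : ∀ z ∈ ball (0:ℂ) r₂, DifferentiableAt ℂ G z := fun z hz =>
    hG.differentiableAt (isOpen_ball.mem_nhds (hsub2 (ball_subset_closedBall hz)))
  have hGpath : Continuous fun s : ℝ => G (circleMap 0 r₂ s) :=
    hGcb.comp_continuous (continuous_circleMap 0 r₂)
      (fun s => circleMap_mem_closedBall _ hr₂0.le s)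
  have hc2 : Continuous fun s : ℝ => ‖reMap m (G (circleMap 0 r₂ s))‖ :=
    ((reMap m).continuous.comp hGpath).norm
  rcases hr₁.1.eq_or_lt with heq | hr₁0
  · -- r₁ = 0
    subst heq
    have hsh := (subharmonic_reMap m G hG).2 0 (mem_ball_self one_pos) r₂ hr₂0 hsub2
    have e1 : ∀ t : ℝ, (0:ℂ) + r₂ * Complex.exp (t * Complex.I) = circleMap 0 r₂ t := by
      intro t; simp [circleMap]
    simp only [e1] at hsh
    calc ∫ t in (0:ℝ)..(2*π), ‖reMap m (G (circleMap 0 0 t))‖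
        = 2*π * ‖reMap m (G 0)‖ := by
          simp only [circleMap_zero_radius, Function.const_apply]
          rw [intervalIntegral.integral_const, smul_eq_mul, sub_zero]
      _ ≤ 2*π * ((2*π)⁻¹ * ∫ t in (0:ℝ)..(2*π), ‖reMap m (G (circleMap 0 r₂ t))‖) := by
          have h2π : (0:ℝ) < 2*π := Real.two_pi_pos
          exact mul_le_mul_of_nonneg_left hsh h2π.le
      _ = ∫ t in (0:ℝ)..(2*π), ‖reMap m (G (circleMap 0 r₂ t))‖ := by
          rw [← mul_assoc, mul_inv_cancel₀ Real.two_pi_pos.ne', one_mul]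
  -- now 0 < r₁ < r₂
  set cfun : ℝ → ℝ := fun s => ‖reMap m (G (circleMap 0 r₂ s))‖ with hcfun
  set P : ℝ → ℝ → ℝ := fun t s =>
    (r₂^2 - ‖(circleMap 0 r₁ t)‖^2) /
      ‖(circleMap 0 r₂ s - circleMap 0 r₁ t)‖^2 with hP
  have habs1 : ∀ t : ℝ, ‖(circleMap 0 r₁ t)‖ = r₁ := fun t => by
    rw [norm_circleMap_zero, _root_.abs_of_nonneg hr₁.1]
  have habs2 : ∀ s : ℝ, ‖(circleMap 0 r₂ s)‖ = r₂ := fun s => by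
    rw [norm_circleMap_zero, _root_.abs_of_nonneg hr₂0.le]
  have hdistinct : ∀ t s : ℝ, circleMap 0 r₂ s - circleMap 0 r₁ t ≠ 0 := by
    intro t s h
    have h' : circleMap 0 r₂ s = circleMap 0 r₁ t := by linear_combination h
    have h2 := habs2 s
    rw [h', habs1 t] at h2
    exact hlt.ne h2
  have hPpos : ∀ t s, 0 ≤ P t s := by
    intro t s
    apply div_nonneg
    · rw [habs1]; nlinarith
    · positivity
  have hwmem : ∀ t : ℝ, circleMap 0 r₁ t ∈ ball (0:ℂ) r₂ := fun t => by
    rw [mem_ball, Complex.dist_eq, sub_zero, habs1]; exact hlt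
  have hcm1 : Continuous fun p : ℝ × ℝ => circleMap 0 r₁ p.1 :=
    (continuous_circleMap 0 r₁).comp continuous_fst
  have hcm2 : Continuous fun p : ℝ × ℝ => circleMap 0 r₂ p.2 :=
    (continuous_circleMap 0 r₂).comp continuous_snd
  have hPcont : Continuous fun p : ℝ × ℝ => P p.1 p.2 * cfun p.2 := by
    refine Continuous.mul ?_ (hc2.comp continuous_snd)
    refine Continuous.div ?_ ?_ ?_
    · exact continuous_const.sub ((continuous_norm.comp hcm1).pow 2)
    · exact (continuous_norm.comp (hcm2.sub hcm1)).pow 2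
    · intro p
      exact pow_ne_zero 2 (norm_ne_zero_iff.mpr (hdistinct p.1 p.2))
  have hPscont : ∀ t : ℝ, Continuous fun s : ℝ => P t s * cfun s := by
    intro t
    have : (fun s : ℝ => P t s * cfun s) = (fun p : ℝ × ℝ => P p.1 p.2 * cfun p.2) ∘ (fun s => (t, s)) := rfl
    rw [this]
    exact hPcont.comp (Continuous.prodMk_right t)
  -- pointwise Poisson bound
  have key : ∀ t : ℝ, ‖reMap m (G (circleMap 0 r₁ t))‖
      ≤ (2*π)⁻¹ * ∫ s in (0:ℝ)..(2*π), P t s * cfun s := by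
    intro t
    have hp := poisson (g := G) hr₂0 hGcb hGdiff (hwmem t)
    have hintg : IntervalIntegrable (fun s : ℝ =>
        ((r₂^2 - ‖(circleMap 0 r₁ t)‖^2) /
          ‖(circleMap 0 r₂ s - circleMap 0 r₁ t)‖^2 : ℝ)
          • G (circleMap 0 r₂ s)) volume 0 (2*π) := by
      apply Continuous.intervalIntegrable
      refine Continuous.smul (f := fun s : ℝ => ((r₂^2 - ‖(circleMap 0 r₁ t)‖^2) /
          ‖(circleMap 0 r₂ s - circleMap 0 r₁ t)‖^2 : ℝ)) ?_ hGpath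
      refine Continuous.div continuous_const
        ((continuous_norm.comp ((continuous_circleMap 0 r₂).sub continuous_const)).pow 2)
        (fun s => pow_ne_zero 2 (norm_ne_zero_iff.mpr (hdistinct t s)))
    calc ‖reMap m (G (circleMap 0 r₁ t))‖
        = (2*π)⁻¹ * ‖∫ s in (0:ℝ)..(2*π), P t s • reMap m (G (circleMap 0 r₂ s))‖ := by
          rw [hp, _root_.map_smul, ← ContinuousLinearMap.intervalIntegral_comp_comm _ hintg,
            norm_smul]
          simp only [ContinuousLinearMap.map_smul, Real.norm_eq_abs,
            _root_.abs_of_nonneg (by positivity : (0:ℝ) ≤ (2*π)⁻¹)]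
          rfl
      _ ≤ (2*π)⁻¹ * ∫ s in (0:ℝ)..(2*π), ‖P t s • reMap m (G (circleMap 0 r₂ s))‖ := by
          gcongr
          exact intervalIntegral.norm_integral_le_integral_norm Real.two_pi_pos.le
      _ = (2*π)⁻¹ * ∫ s in (0:ℝ)..(2*π), P t s * cfun s := by
          congr 1
          refine intervalIntegral.integral_congr (fun s _ => ?_)
          rw [norm_smul, Real.norm_eq_abs, _root_.abs_of_nonneg (hPpos t s)]
  -- integrability facts
  have hInt1 : IntervalIntegrable (fun t : ℝ => ‖reMap m (G (circleMap 0 r₁ t))‖) volume 0 (2*π) := by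
    apply Continuous.intervalIntegrable
    refine ((reMap m).continuous.comp (hGcb.comp_continuous (continuous_circleMap 0 r₁) (fun t => ?_))).norm
    rw [mem_closedBall, Complex.dist_eq, sub_zero, habs1]
    exact h12
  have hΦcont : Continuous fun t : ℝ => ∫ s in (0:ℝ)..(2*π), P t s * cfun s :=
    intervalIntegral.continuous_parametric_intervalIntegral_of_continuous'
      (f := fun t s => P t s * cfun s) hPcont 0 (2*π)
  have hprod : IntegrableOn (fun p : ℝ × ℝ => P p.1 p.2 * cfun p.2)
      ((Ioc (0:ℝ) (2*π)) ×ˢ (Ioc (0:ℝ) (2*π))) (volume.prod volume) :=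
    (hPcont.continuousOn.integrableOn_compact (isCompact_Icc.prod isCompact_Icc)).mono_set
      (prod_mono Ioc_subset_Icc_self Ioc_subset_Icc_self)
  have hfub : (∫ t in Ioc (0:ℝ) (2*π), ∫ s in Ioc (0:ℝ) (2*π), P t s * cfun s)
      = ∫ s in Ioc (0:ℝ) (2*π), ∫ t in Ioc (0:ℝ) (2*π), P t s * cfun s := by
    apply MeasureTheory.integral_integral_swap
    rw [Measure.prod_restrict]
    exact hprod
  have hkernel : ∀ s : ℝ, (∫ t in (0:ℝ)..(2*π), P t s) = 2*π := fun s =>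
    poisson_kernel_integral hr₁0 hlt (habs2 s)
  have hPint : ∀ s : ℝ, IntervalIntegrable (fun t => P t s) volume 0 (2*π) := by
    intro s
    apply Continuous.intervalIntegrable
    refine Continuous.div (continuous_const.sub ((continuous_norm.comp
      (continuous_circleMap 0 r₁)).pow 2))
      ((continuous_norm.comp (continuous_const.sub (continuous_circleMap 0 r₁))).pow 2)
      (fun t => pow_ne_zero 2 (norm_ne_zero_iff.mpr (hdistinct t s)))
  calc (∫ t in (0:ℝ)..(2*π), ‖reMap m (G (circleMap 0 r₁ t))‖)
      ≤ ∫ t in (0:ℝ)..(2*π), (2*π)⁻¹ * ∫ s in (0:ℝ)..(2*π), P t s * cfun s :=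
        intervalIntegral.integral_mono_on Real.two_pi_pos.le hInt1
          ((continuous_const.mul hΦcont).intervalIntegrable _ _) (fun t _ => key t)
    _ = (2*π)⁻¹ * ∫ t in (0:ℝ)..(2*π), ∫ s in (0:ℝ)..(2*π), P t s * cfun s :=
        intervalIntegral.integral_const_mul _ _
    _ = (2*π)⁻¹ * ∫ s in (0:ℝ)..(2*π), ∫ t in (0:ℝ)..(2*π), P t s * cfun s := by
        rw [intervalIntegral.integral_of_le Real.two_pi_pos.le,
          intervalIntegral.integral_of_le Real.two_pi_pos.le]
        congr 1
        simp only [intervalIntegral.integral_of_le Real.two_pi_pos.le]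
        exact hfub
    _ = (2*π)⁻¹ * ∫ s in (0:ℝ)..(2*π), (2*π) * cfun s := by
        congr 1
        refine intervalIntegral.integral_congr (fun s _ => ?_)
        rw [intervalIntegral.integral_mul_const, hkernel s]
    _ = ∫ s in (0:ℝ)..(2*π), cfun s := by
        rw [intervalIntegral.integral_const_mul, ← mul_assoc,
          inv_mul_cancel₀ Real.two_pi_pos.ne', one_mul]

/-- If `u : 𝔻 → ℝ^m` is harmonic, then `|u|` and `|u'_t|` (norm of the angular
derivative) are subharmonic, and consequently the length `L(r)` of `t ↦ u(re^{it})`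
and the diameter `d(r)` of `u(D_r)` are nondecreasing in `r ∈ [0,1)`. -/
theorem subharmonic_length_diam_monotone (m : ℕ) (u : ℂ → EuclideanSpace ℝ (Fin m))
    (F : ℂ → EuclideanSpace ℂ (Fin m))
    (hF : DifferentiableOn ℂ F (Metric.ball 0 1))
    (hre : ∀ z ∈ Metric.ball (0 : ℂ) 1, ∀ i, u z i = (F z i).re) :
    SubharmonicOn (fun z => ‖u z‖) (Metric.ball 0 1) ∧
    SubharmonicOn (fun z => ‖fderiv ℝ u z (Complex.I * z)‖) (Metric.ball 0 1) ∧
    MonotoneOn (fun r : ℝ =>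
        ∫ t in (0 : ℝ)..(2 * Real.pi),
          ‖fderiv ℝ u ((r : ℂ) * Complex.exp (t * Complex.I))
              (Complex.I * ((r : ℂ) * Complex.exp (t * Complex.I)))‖)
      (Set.Ico (0 : ℝ) 1) ∧
    MonotoneOn (fun r : ℝ => Metric.diam (u '' Metric.ball 0 r)) (Set.Ico (0 : ℝ) 1) := by
  have hu : ∀ z ∈ ball (0:ℂ) 1, u z = reMap m (F z) := fun z hz => by ext i; exact hre z hz i
  set G : ℂ → EuclideanSpace ℂ (Fin m) := fun z => (Complex.I * z) • deriv F z with hGdef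
  have hderivF : DifferentiableOn ℂ (deriv F) (ball (0:ℂ) 1) :=
    ((hF.analyticOnNhd isOpen_ball).deriv).differentiableOn
  have hGdiff : DifferentiableOn ℂ G (ball (0:ℂ) 1) :=
    ((differentiable_const _).mul differentiable_id).differentiableOn.smul hderivF
  have hfd : ∀ z ∈ ball (0:ℂ) 1, fderiv ℝ u z (Complex.I * z) = reMap m (G z) := by
    intro z hz
    have hFz : DifferentiableAt ℂ F z := hF.differentiableAt (isOpen_ball.mem_nhds hz)
    have hev : u =ᶠ[nhds z] (reMap m ∘ F) :=
      Filter.eventuallyEq_of_mem (isOpen_ball.mem_nhds hz) (fun w hw => hu w hw)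
    have h1 : fderiv ℝ u z = fderiv ℝ (reMap m ∘ F) z := hev.fderiv_eq
    have h2 : fderiv ℝ (reMap m ∘ F) z = (reMap m).comp (fderiv ℝ F z) :=
      ((reMap m).hasFDerivAt.comp z (hFz.restrictScalars ℝ).hasFDerivAt).fderiv
    have h3 : fderiv ℝ F z = (fderiv ℂ F z).restrictScalars ℝ :=
      (hFz.hasFDerivAt.restrictScalars ℝ).fderiv
    rw [h1, h2, ContinuousLinearMap.comp_apply, h3]
    have h4 : (fderiv ℂ F z) (Complex.I * z) = (Complex.I * z) • (fderiv ℂ F z) 1 := by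
      rw [← ContinuousLinearMap.map_smul, smul_eq_mul, mul_one]
    show reMap m ((fderiv ℂ F z) (Complex.I * z)) = reMap m (G z)
    rw [h4, fderiv_apply_one_eq_deriv]
  have sh1 := subharmonic_reMap m F hF
  have sh2 := subharmonic_reMap m G hGdiff
  refine ⟨⟨sh1.1.congr (fun z hz => by rw [hu z hz]), ?_⟩,
    ⟨sh2.1.congr (fun z hz => by rw [hfd z hz]), ?_⟩, ?_, ?_⟩
  · intro c hc r hr hsubset
    have hmem : ∀ t : ℝ, c + r * Complex.exp (t * Complex.I) ∈ ball (0:ℂ) 1 := fun t =>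
      hsubset (by simpa [circleMap] using circleMap_mem_closedBall c hr.le t)
    have e : ∀ t : ℝ, ‖u (c + r * Complex.exp (t * Complex.I))‖
        = ‖reMap m (F (c + r * Complex.exp (t * Complex.I)))‖ := fun t => by
      rw [hu _ (hmem t)]
    simp only [e]
    rw [hu c hc]
    exact sh1.2 c hc r hr hsubset
  · intro c hc r hr hsubset
    have hmem : ∀ t : ℝ, c + r * Complex.exp (t * Complex.I) ∈ ball (0:ℂ) 1 := fun t =>
      hsubset (by simpa [circleMap] using circleMap_mem_closedBall c hr.le t)
    have e : ∀ t : ℝ, ‖fderiv ℝ u (c + r * Complex.exp (t * Complex.I))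
          (Complex.I * (c + r * Complex.exp (t * Complex.I)))‖
        = ‖reMap m (G (c + r * Complex.exp (t * Complex.I)))‖ := fun t => by
      rw [hfd _ (hmem t)]
    simp only [e]
    rw [hfd c hc]
    exact sh2.2 c hc r hr hsubset
  · have hm := mono_L m G hGdiff
    have e : ∀ r ∈ Ico (0:ℝ) 1,
        (∫ t in (0:ℝ)..(2*π), ‖fderiv ℝ u ((r : ℂ) * Complex.exp (t * Complex.I))
            (Complex.I * ((r : ℂ) * Complex.exp (t * Complex.I)))‖)
        = ∫ t in (0:ℝ)..(2*π), ‖reMap m (G (circleMap 0 r t))‖ := by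
      intro r hrm
      refine intervalIntegral.integral_congr (fun t _ => ?_)
      have hmem : (r:ℂ) * Complex.exp (t * Complex.I) ∈ ball (0:ℂ) 1 := by
        simpa [circleMap] using circleMap_mem_ball' hrm.2 hrm.1 t
      rw [hfd _ hmem, circleMap_zero]
    intro a ha b hb hab
    exact le_trans (le_of_eq (e a ha))
      (le_trans (hm ha hb hab) (le_of_eq (e b hb).symm))
  · intro a ha b hb hab
    have hbsub : closedBall (0:ℂ) b ⊆ ball 0 1 := closedBall_subset_ball hb.2
    have hucont : ContinuousOn u (closedBall (0:ℂ) b) :=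
      (((reMap m).continuous.comp_continuousOn hF.continuousOn).mono hbsub).congr
        (fun z hz => hu z (hbsub hz))
    have hcompact : IsCompact (u '' closedBall (0:ℂ) b) :=
      (isCompact_closedBall _ _).image_of_continuousOn hucont
    refine Metric.diam_mono (image_mono (f := u) (ball_subset_ball hab)) ?_
    exact hcompact.isBounded.subset (image_mono (f := u) ball_subset_closedBall)
end
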